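/- For all ε ∈ (0, 1/2) and ε' ∈ (0, 1/2]: | log((1+2ε)/(1-2ε)) - log((1+4εε')/(1-4εε')) | ≤ (1/(2ε') - 1) · 4ε/(1 - 4ε²). -/

import Mathlib

/-- Deviation between the naive Bayes weight and the pseudo naive Bayes weight. -/
theorem stmt_8 (ε ε' : ℝ) (hε : ε ∈ Set.Ioo (0:ℝ) (1/2)) (hε' : ε' ∈ Set.Ioc (0:ℝ) (1/2)) :
    |Real.log ((1 + 2*ε) / (1 - 2*ε)) - Real.log ((1 + 4*ε*ε') / (1 - 4*ε*ε'))| ≤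
      (1 / (2*ε') - 1) * (4*ε / (1 - 4*ε^2)) := by
  obtain ⟨hε0, hε1⟩ := hε
  obtain ⟨hε'0, hε'1⟩ := hε'
  have hb0 : (0:ℝ) < 4*ε*ε' := by positivity
  have hba : 4*ε*ε' ≤ 2*ε := by nlinarith
  have h1a : (0:ℝ) < 1 - 2*ε := by linarith
  have h1b : (0:ℝ) < 1 - 4*ε*ε' := by linarith
  have hp1 : (0:ℝ) < 1 + 2*ε := by linarith
  have hp2 : (0:ℝ) < 1 + 4*ε*ε' := by linarith
  rw [Real.log_div (ne_of_gt hp1) (ne_of_gt h1a),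
      Real.log_div (ne_of_gt hp2) (ne_of_gt h1b)]
  have key1 : Real.log (1+2*ε) - Real.log (1+4*ε*ε') ≤ (2*ε - 4*ε*ε')/(1+4*ε*ε') := by
    rw [← Real.log_div (ne_of_gt hp1) (ne_of_gt hp2)]
    have h := Real.log_le_sub_one_of_pos (show (0:ℝ) < (1+2*ε)/(1+4*ε*ε') by positivity)
    have heq : (1+2*ε)/(1+4*ε*ε') - 1 = (2*ε - 4*ε*ε')/(1+4*ε*ε') := by
      field_simp
      ring
    linarith [heq ▸ h]
  have key2 : Real.log (1-4*ε*ε') - Real.log (1-2*ε) ≤ (2*ε - 4*ε*ε')/(1-2*ε) := by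
    rw [← Real.log_div (ne_of_gt h1b) (ne_of_gt h1a)]
    have h := Real.log_le_sub_one_of_pos (show (0:ℝ) < (1-4*ε*ε')/(1-2*ε) by positivity)
    have heq : (1-4*ε*ε')/(1-2*ε) - 1 = (2*ε - 4*ε*ε')/(1-2*ε) := by
      rw [div_sub_one (ne_of_gt h1a)]
      ring
    linarith [heq ▸ h]
  have mono1 : Real.log (1+4*ε*ε') ≤ Real.log (1+2*ε) :=
    Real.log_le_log hp2 (by linarith)
  have mono2 : Real.log (1-2*ε) ≤ Real.log (1-4*ε*ε') :=
    Real.log_le_log h1a (by linarith)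
  rw [abs_of_nonneg (by linarith)]
  have final : (2*ε - 4*ε*ε')/(1+4*ε*ε') + (2*ε - 4*ε*ε')/(1-2*ε) ≤
      (1 / (2*ε') - 1) * (4*ε / (1 - 4*ε^2)) := by
    have ha2 : (0:ℝ) < 1 - 4*ε^2 := by nlinarith
    have t1 : (2*ε - 4*ε*ε')/(1+4*ε*ε') ≤ (2*ε - 4*ε*ε')/(2*ε'*(1+2*ε)) := by
      apply div_le_div_of_nonneg_left (by linarith) (by positivity)
      nlinarith
    have t2 : (2*ε - 4*ε*ε')/(1-2*ε) ≤ (2*ε - 4*ε*ε')/(2*ε'*(1-2*ε)) := by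
      apply div_le_div_of_nonneg_left (by linarith) (by positivity)
      nlinarith
    have heq : (2*ε - 4*ε*ε')/(2*ε'*(1+2*ε)) + (2*ε - 4*ε*ε')/(2*ε'*(1-2*ε)) =
        (1 / (2*ε') - 1) * (4*ε / (1 - 4*ε^2)) := by
      have hA : 2*ε'*(1+2*ε) ≠ 0 := (mul_pos (by positivity) hp1).ne'
      have hB : 2*ε'*(1-2*ε) ≠ 0 := (mul_pos (by positivity) h1a).ne'
      have hC : 2*ε' ≠ 0 := by positivity
      rw [show (1:ℝ) - 4*ε^2 = (1-2*ε)*(1+2*ε) by ring, div_add_div _ _ hA hB,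
        div_sub_one hC, div_mul_div_comm,
        div_eq_div_iff (mul_ne_zero hA hB) (mul_ne_zero hC (mul_ne_zero h1a.ne' hp1.ne'))]
      ring
    linarith [heq ▸ (add_le_add t1 t2)]
  linarith
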